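/- Let ζ be a real-valued random variable and let ζ̂₁,…,ζ̂ₙ be fixed real numbers with empirical mean ζ̄ = (1/n)∑ᵢ ζ̂ᵢ. Let 𝔓̂ₙ be the empirical measure. If the support Ξ ⊆ ℝ is an interval with sup Ξ = B < ∞, then sup over all probability measures ℚ with W₁(ℚ, 𝔓̂ₙ) ≤ ε of 𝔼_ℚ[ζ] equals min{ζ̄ + ε, B}. -/

import Mathlib

open MeasureTheory ENNReal

/-- Wasserstein-type optimal transport cost between two measures, as the infimum of
the integral of a ground cost over all couplings. -/
noncomputable def Wcost {E : Type*} [MeasurableSpace E] (c : E → E → ℝ)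
    (μ ν : Measure E) : ℝ≥0∞ :=
  ⨅ (π : Measure (E × E)) (_ : π.map Prod.fst = μ) (_ : π.map Prod.snd = ν),
    ∫⁻ z, ENNReal.ofReal (c z.1 z.2) ∂π

/-- The empirical measure of a finite sample. -/
noncomputable def empMeasure {E : Type*} [MeasurableSpace E] {n : ℕ}
    (ξ : Fin n → E) : Measure E :=
  ((n : ℝ≥0∞))⁻¹ • ∑ i, Measure.dirac (ξ i)

section helpers
variable {n : ℕ}

lemma RMB_integrable_dirac (f : ℝ → ℝ) (a : ℝ) : Integrable f (Measure.dirac a) := by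
  have h : f =ᵐ[Measure.dirac a] fun _ => f a := by
    rw [ae_dirac_eq]; exact Filter.eventually_pure.2 rfl
  exact (integrable_const (f a)).congr h.symm

lemma RMB_emp_univ (hn : 0 < n) (ξ : Fin n → ℝ) : empMeasure ξ Set.univ = 1 := by
  simp only [empMeasure, Measure.smul_apply, Measure.coe_finset_sum, Finset.sum_apply,
    Measure.dirac_apply, Set.indicator_of_mem (Set.mem_univ _), Pi.one_apply, smul_eq_mul]
  rw [Finset.sum_const, Finset.card_univ, Fintype.card_fin, nsmul_eq_mul, mul_one,
    ENNReal.inv_mul_cancel (by exact_mod_cast hn.ne') (natCast_ne_top n)]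

lemma RMB_emp_prob (hn : 0 < n) (ξ : Fin n → ℝ) : IsProbabilityMeasure (empMeasure ξ) :=
  ⟨RMB_emp_univ hn ξ⟩

lemma RMB_emp_integrable (ξ : Fin n → ℝ) (f : ℝ → ℝ) : Integrable f (empMeasure ξ) := by
  rcases Nat.eq_zero_or_pos n with hn | hn
  · subst hn
    simp only [empMeasure, Nat.cast_zero, Finset.univ_eq_empty, Finset.sum_empty, smul_zero]
    exact integrable_zero_measure
  · rw [empMeasure, integrable_smul_measure (ENNReal.inv_ne_zero.2 (natCast_ne_top n)) (ENNReal.inv_ne_top.2 (by exact_mod_cast hn.ne')),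
      integrable_finset_sum_measure]
    exact fun i _ => RMB_integrable_dirac f (ξ i)

lemma RMB_emp_integral (hn : 0 < n) (ξ : Fin n → ℝ) (f : ℝ → ℝ) :
    ∫ x, f x ∂(empMeasure ξ) = (∑ i, f (ξ i)) / n := by
  rw [empMeasure, integral_smul_measure,
    integral_finset_sum_measure (fun i _ => RMB_integrable_dirac f (ξ i))]
  simp only [integral_dirac, smul_eq_mul]
  rw [ENNReal.toReal_inv, ENNReal.toReal_natCast, div_eq_inv_mul]

lemma RMB_emp_lintegral (ξ : Fin n → ℝ) (f : ℝ → ℝ≥0∞) :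
    ∫⁻ x, f x ∂(empMeasure ξ) = (n : ℝ≥0∞)⁻¹ * ∑ i, f (ξ i) := by
  rw [empMeasure, lintegral_smul_measure, lintegral_finset_sum_measure]
  simp [lintegral_dirac]

lemma RMB_emp_compl (ξ : Fin n → ℝ) {A : Set ℝ} (h : ∀ i, ξ i ∈ A) :
    empMeasure ξ Aᶜ = 0 := by
  simp only [empMeasure, Measure.smul_apply, Measure.coe_finset_sum, Finset.sum_apply,
    Measure.dirac_apply, smul_eq_mul]
  have : ∀ i : Fin n, (Aᶜ : Set ℝ).indicator (1 : ℝ → ℝ≥0∞) (ξ i) = 0 := fun i =>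
    Set.indicator_of_notMem (by simp [h i]) _
  simp [this]

end helpers

section main
variable {n : ℕ}

lemma RMB_mem (hn : 0 < n) (Ξ : Set ℝ) (ζ : Fin n → ℝ) (hζ : ∀ i, ζ i ∈ Ξ)
    (ε : ℝ) (hε : 0 < ε) (b : ℝ) (hbΞ : b ∈ Ξ) (hb : ∀ i, ζ i ≤ b) :
    min ((∑ i, ζ i) / n + ε) b ∈ {r : ℝ | ∃ Q : Measure ℝ, IsProbabilityMeasure Q ∧ Q Ξᶜ = 0 ∧
        Wcost (fun a b => |a - b|) Q (empMeasure ζ) ≤ ENNReal.ofReal ε ∧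
        r = ∫ s, s ∂Q} := by
  set m : ℝ := (∑ i, ζ i) / n with hm
  have hnR : (0:ℝ) < n := by exact_mod_cast hn
  have hmb : m ≤ b := by
    rw [hm, div_le_iff₀ hnR]
    calc ∑ i, ζ i ≤ ∑ _i : Fin n, b := Finset.sum_le_sum fun i _ => hb i
    _ = b * n := by simp [mul_comm]
  set t : ℝ := min (ε / (b - m)) 1 with htdef
  have ht0 : 0 ≤ t := le_min (div_nonneg hε.le (by linarith)) zero_le_one
  have ht1 : t ≤ 1 := min_le_right _ _
  have key : t * (b - m) = min ε (b - m) := by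
    rcases eq_or_lt_of_le hmb with h | h
    · simp [← h, min_eq_right hε.le]
    · rw [htdef, min_mul_of_nonneg _ _ (by linarith : (0:ℝ) ≤ b - m),
        div_mul_cancel₀ _ (by linarith : b - m ≠ 0), one_mul]
  have hsum : ENNReal.ofReal (1 - t) + ENNReal.ofReal t = 1 := by
    rw [← ENNReal.ofReal_add (by linarith) ht0]; simp
  set Q : Measure ℝ :=
    ENNReal.ofReal (1 - t) • empMeasure ζ + ENNReal.ofReal t • Measure.dirac b with hQ
  have hprob : IsProbabilityMeasure Q := by
    constructor
    rw [hQ]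
    simp only [Measure.add_apply, Measure.smul_apply, smul_eq_mul,
      RMB_emp_univ hn ζ, measure_univ, mul_one]
    exact hsum
  have hnull : Q Ξᶜ = 0 := by
    rw [hQ]
    simp only [Measure.add_apply, Measure.smul_apply, smul_eq_mul,
      RMB_emp_compl ζ hζ, Measure.dirac_apply,
      Set.indicator_of_notMem (by simp [hbΞ] : b ∉ Ξᶜ), mul_zero, add_zero]
  have mdiag : Measurable fun x : ℝ => (x, x) := measurable_id.prodMk measurable_id
  have mconst : Measurable fun x : ℝ => (b, x) := measurable_const.prodMk measurable_id
  set π : Measure (ℝ × ℝ) :=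
    ENNReal.ofReal (1 - t) • (empMeasure ζ).map (fun x => (x, x)) +
      ENNReal.ofReal t • (empMeasure ζ).map (fun x => (b, x)) with hπ
  have hfst : π.map Prod.fst = Q := by
    rw [hπ, Measure.map_add _ _ measurable_fst, Measure.map_smul, Measure.map_smul,
      Measure.map_map measurable_fst mdiag, Measure.map_map measurable_fst mconst]
    have e1 : (Prod.fst ∘ fun x : ℝ => (x, x)) = id := rfl
    have e2 : (Prod.fst ∘ fun x : ℝ => (b, x)) = fun _ => b := rfl
    rw [e1, e2, Measure.map_id, Measure.map_const, RMB_emp_univ hn ζ, one_smul, hQ]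
  have hsnd : π.map Prod.snd = empMeasure ζ := by
    rw [hπ, Measure.map_add _ _ measurable_snd, Measure.map_smul, Measure.map_smul,
      Measure.map_map measurable_snd mdiag, Measure.map_map measurable_snd mconst]
    have e1 : (Prod.snd ∘ fun x : ℝ => (x, x)) = id := rfl
    have e2 : (Prod.snd ∘ fun x : ℝ => (b, x)) = id := rfl
    rw [e1, e2, Measure.map_id, ← add_smul, hsum, one_smul]
  have hcostm : Measurable fun z : ℝ × ℝ => ENNReal.ofReal |z.1 - z.2| :=
    (measurable_fst.sub measurable_snd).abs.ennreal_ofReal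
  have hninv : ((n : ℝ≥0∞))⁻¹ = ENNReal.ofReal (n : ℝ)⁻¹ := by
    rw [ENNReal.ofReal_inv_of_pos hnR, ENNReal.ofReal_natCast]
  have hcost : (∫⁻ z, ENNReal.ofReal |z.1 - z.2| ∂π) = ENNReal.ofReal (t * (b - m)) := by
    rw [hπ, lintegral_add_measure, lintegral_smul_measure, lintegral_smul_measure,
      lintegral_map hcostm mdiag, lintegral_map hcostm mconst]
    simp only [sub_self, abs_zero, ENNReal.ofReal_zero, lintegral_zero, smul_eq_mul, mul_zero, zero_add]
    rw [RMB_emp_lintegral]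
    have habs : ∀ i : Fin n, |b - ζ i| = b - ζ i := fun i => abs_of_nonneg (by linarith [hb i])
    simp only [habs]
    rw [← ENNReal.ofReal_sum_of_nonneg (fun i _ => by linarith [hb i]), hninv,
      ← ENNReal.ofReal_mul (by positivity), ← ENNReal.ofReal_mul ht0]
    congr 1
    rw [Finset.sum_sub_distrib, Finset.sum_const, Finset.card_univ, Fintype.card_fin,
      nsmul_eq_mul]
    field_simp [hm]
    ring_nf
    rw [hm]; field_simp
    try trivial
    try exact Or.inl trivial
  refine ⟨Q, hprob, hnull, ?_, ?_⟩
  · calc Wcost (fun a b => |a - b|) Q (empMeasure ζ)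
        ≤ ∫⁻ z, ENNReal.ofReal |z.1 - z.2| ∂π := by
          refine iInf_le_of_le π ?_
          rw [iInf_pos hfst, iInf_pos hsnd]
    _ ≤ ENNReal.ofReal ε := by
          rw [hcost]
          exact ENNReal.ofReal_le_ofReal (by rw [key]; exact min_le_left _ _)
  · have hint1 : Integrable (fun s : ℝ => s) (ENNReal.ofReal (1 - t) • empMeasure ζ) :=
      (RMB_emp_integrable ζ _).smul_measure ENNReal.ofReal_ne_top
    have hint2 : Integrable (fun s : ℝ => s) (ENNReal.ofReal t • Measure.dirac b) :=
      (RMB_integrable_dirac _ b).smul_measure ENNReal.ofReal_ne_top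
    rw [hQ, integral_add_measure hint1 hint2, integral_smul_measure, integral_smul_measure,
      integral_dirac, RMB_emp_integral hn, ENNReal.toReal_ofReal (by linarith),
      ENNReal.toReal_ofReal ht0]
    simp only [smul_eq_mul, ← hm]
    have : (1 - t) * m + t * b = m + t * (b - m) := by ring
    rw [this, key]
    rcases le_total ε (b - m) with h | h
    · rw [min_eq_left h, min_eq_left (by linarith)]
    · rw [min_eq_right h, min_eq_right (by linarith)]; ring


lemma RMB_coupling_bound (hn : 0 < n) (ζ : Fin n → ℝ) (Q : Measure ℝ)
    (hQprob : IsProbabilityMeasure Q) (π : Measure (ℝ × ℝ))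
    (h1 : π.map Prod.fst = Q) (h2 : π.map Prod.snd = empMeasure ζ)
    (c : ℝ) (hc0 : 0 ≤ c) (hc : ∫⁻ z, ENNReal.ofReal |z.1 - z.2| ∂π ≤ ENNReal.ofReal c) :
    Integrable (fun s : ℝ => s) Q ∧ ∫ s, s ∂Q ≤ (∑ i, ζ i) / n + c := by
  have hπuniv : π Set.univ = 1 := by
    have := hQprob.measure_univ
    rw [← h1, Measure.map_apply measurable_fst MeasurableSet.univ] at this
    simpa using this
  haveI : IsProbabilityMeasure π := ⟨hπuniv⟩
  -- integrability of the second coordinate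
  have hne : (Finset.univ : Finset (Fin n)).Nonempty := ⟨⟨0, hn⟩, Finset.mem_univ _⟩
  set C : ℝ := Finset.univ.sup' hne fun i => |ζ i| with hC
  set A : Set ℝ := ↑(Finset.image ζ Finset.univ) with hA
  have hAmeas : MeasurableSet A := (Finset.image ζ Finset.univ).finite_toSet.measurableSet
  have hanull : π {z : ℝ × ℝ | z.2 ∈ A}ᶜ = 0 := by
    have : {z : ℝ × ℝ | z.2 ∈ A}ᶜ = Prod.snd ⁻¹' Aᶜ := rfl
    rw [this, ← Measure.map_apply measurable_snd hAmeas.compl, h2]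
    exact RMB_emp_compl ζ (fun i => by simp [hA])
  have hae2 : ∀ᵐ z : ℝ × ℝ ∂π, ‖z.2‖ ≤ C := by
    refine Filter.Eventually.mono (mem_ae_iff.2 hanull) ?_
    intro z hz
    simp only [hA, Set.mem_setOf_eq, Finset.coe_image, Set.mem_image] at hz
    obtain ⟨i, _, hi⟩ := hz
    rw [Real.norm_eq_abs, ← hi]
    exact Finset.le_sup' (fun i => |ζ i|) (Finset.mem_univ i)
  have hint2 : Integrable (fun z : ℝ × ℝ => z.2) π :=
    (integrable_const C).mono' measurable_snd.aestronglyMeasurable hae2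
  -- integrability of the cost
  have hdm : Measurable fun z : ℝ × ℝ => |z.1 - z.2| :=
    (measurable_fst.sub measurable_snd).abs
  have hintd : Integrable (fun z : ℝ × ℝ => |z.1 - z.2|) π := by
    refine ⟨hdm.aestronglyMeasurable, ?_⟩
    rw [hasFiniteIntegral_iff_ofReal (Filter.Eventually.of_forall fun z => abs_nonneg _)]
    exact lt_of_le_of_lt hc ENNReal.ofReal_lt_top
  have hintsub : Integrable (fun z : ℝ × ℝ => z.1 - z.2) π :=
    hintd.mono' (measurable_fst.sub measurable_snd).aestronglyMeasurable
      (Filter.Eventually.of_forall fun z => by rw [Real.norm_eq_abs])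
  have hint1 : Integrable (fun z : ℝ × ℝ => z.1) π := by
    exact (hintsub.add hint2).congr (Filter.Eventually.of_forall fun z => by simp)
  have hQint : Integrable (fun s : ℝ => s) Q := by
    rw [← h1]
    exact (integrable_map_measure measurable_id.aestronglyMeasurable
      measurable_fst.aemeasurable).2 hint1
  refine ⟨hQint, ?_⟩
  have hEQ : ∫ s, s ∂Q = ∫ z : ℝ × ℝ, z.1 ∂π := by
    rw [← h1]
    exact integral_map (f := fun s : ℝ => s) measurable_fst.aemeasurable
      measurable_id.aestronglyMeasurable
  have hE2 : ∫ z : ℝ × ℝ, z.2 ∂π = (∑ i, ζ i) / n := by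
    rw [← RMB_emp_integral hn ζ (fun s => s), ← h2]
    exact (integral_map (f := fun s : ℝ => s) measurable_snd.aemeasurable
      measurable_id.aestronglyMeasurable).symm
  have hsplit : ∫ z : ℝ × ℝ, z.1 ∂π = (∫ z : ℝ × ℝ, z.1 - z.2 ∂π) + ∫ z : ℝ × ℝ, z.2 ∂π := by
    rw [← integral_add hintsub hint2]
    simp
  have hdle : ∫ z : ℝ × ℝ, z.1 - z.2 ∂π ≤ c := by
    calc ∫ z : ℝ × ℝ, z.1 - z.2 ∂π ≤ ∫ z : ℝ × ℝ, |z.1 - z.2| ∂π :=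
          integral_mono hintsub hintd fun z => le_abs_self _
    _ = (∫⁻ z, ENNReal.ofReal |z.1 - z.2| ∂π).toReal := by
          rw [integral_eq_lintegral_of_nonneg_ae
            (Filter.Eventually.of_forall fun z => abs_nonneg _) hdm.aestronglyMeasurable]
    _ ≤ (ENNReal.ofReal c).toReal := ENNReal.toReal_mono ENNReal.ofReal_ne_top hc
    _ = c := ENNReal.toReal_ofReal hc0
  rw [hEQ, hsplit, hE2]
  linarith

lemma RMB_ub (hn : 0 < n) (Ξ : Set ℝ) (B : ℝ) (hB : IsLUB Ξ B)
    (ζ : Fin n → ℝ) (ε : ℝ) (hε : 0 < ε) (r : ℝ)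
    (hr : r ∈ {r : ℝ | ∃ Q : Measure ℝ, IsProbabilityMeasure Q ∧ Q Ξᶜ = 0 ∧
        Wcost (fun a b => |a - b|) Q (empMeasure ζ) ≤ ENNReal.ofReal ε ∧
        r = ∫ s, s ∂Q}) : r ≤ min ((∑ i, ζ i) / n + ε) B := by
  obtain ⟨Q, hQprob, hnull, hW, hre⟩ := hr
  have hext : ∀ δ : ℝ, 0 < δ → ∃ π : Measure (ℝ × ℝ), π.map Prod.fst = Q ∧
      π.map Prod.snd = empMeasure ζ ∧
      ∫⁻ z, ENNReal.ofReal |z.1 - z.2| ∂π ≤ ENNReal.ofReal (ε + δ) := by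
    intro δ hδ
    have hlt : Wcost (fun a b => |a - b|) Q (empMeasure ζ) < ENNReal.ofReal (ε + δ) :=
      lt_of_le_of_lt hW ((ENNReal.ofReal_lt_ofReal_iff (by linarith)).2 (by linarith))
    simp only [Wcost, iInf_lt_iff] at hlt
    obtain ⟨π, hf, hs, hcost⟩ := hlt
    exact ⟨π, hf, hs, hcost.le⟩
  refine le_min ?_ ?_
  · refine le_of_forall_pos_le_add fun δ hδ => ?_
    obtain ⟨π, hf, hs, hcost⟩ := hext δ hδ
    have := (RMB_coupling_bound hn ζ Q hQprob π hf hs (ε + δ) (by linarith) hcost).2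
    rw [hre]
    linarith
  · obtain ⟨π, hf, hs, hcost⟩ := hext 1 one_pos
    have hQint := (RMB_coupling_bound hn ζ Q hQprob π hf hs (ε + 1) (by linarith) hcost).1
    have haeB : ∀ᵐ s ∂Q, s ≤ B :=
      Filter.Eventually.mono (mem_ae_iff.2 hnull) fun s hs => hB.1 hs
    rw [hre]
    calc ∫ s, s ∂Q ≤ ∫ _, B ∂Q := integral_mono_ae hQint (integrable_const B) haeB
    _ = B := by simp
end main

/-- The 1-Wasserstein robust mean over a bounded-above interval support:
`sup { 𝔼_Q[ζ] : Q prob. measure on Ξ, W₁(Q, 𝔓̂ₙ) ≤ ε } = min (ζ̄ + ε) B`. -/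
theorem robust_mean_bounded_interval {n : ℕ} (hn : 0 < n)
    (Ξ : Set ℝ) (hΞ : Ξ.OrdConnected) (B : ℝ) (hB : IsLUB Ξ B)
    (ζ : Fin n → ℝ) (hζ : ∀ i, ζ i ∈ Ξ) (ε : ℝ) (hε : 0 < ε) :
    sSup {r : ℝ | ∃ Q : Measure ℝ, IsProbabilityMeasure Q ∧ Q Ξᶜ = 0 ∧
        Wcost (fun a b => |a - b|) Q (empMeasure ζ) ≤ ENNReal.ofReal ε ∧
        r = ∫ s, s ∂Q} =
      min ((∑ i, ζ i) / n + ε) B := by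
  have hne : (Finset.univ : Finset (Fin n)).Nonempty := ⟨⟨0, hn⟩, Finset.mem_univ _⟩
  obtain ⟨iM, hiM⟩ := Finset.exists_mem_eq_sup' hne ζ
  set M : ℝ := Finset.univ.sup' hne ζ with hM
  have hMΞ : M ∈ Ξ := hiM.2 ▸ hζ iM
  have hMle : ∀ i, ζ i ≤ M := fun i => Finset.le_sup' ζ (Finset.mem_univ i)
  refine csSup_eq_of_forall_le_of_forall_lt_exists_gt
    ⟨_, RMB_mem hn Ξ ζ hζ ε hε M hMΞ hMle⟩
    (fun r hr => RMB_ub hn Ξ B hB ζ ε hε r hr) (fun w hw => ?_)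
  rw [lt_min_iff] at hw
  obtain ⟨hw1, hw2⟩ := hw
  obtain ⟨b, hbΞ, hbw, hble⟩ : ∃ b ∈ Ξ, w < b ∧ ∀ i, ζ i ≤ b := by
    rcases lt_or_ge w M with h | h
    · exact ⟨M, hMΞ, h, hMle⟩
    · by_contra hcon
      push_neg at hcon
      have hub : ∀ x ∈ Ξ, x ≤ w := by
        intro x hx
        by_contra hxw
        push_neg at hxw
        obtain ⟨i, hi⟩ := hcon x hx hxw
        exact absurd hi (not_lt.2 (le_trans (hMle i) (le_trans h hxw.le)))
      exact absurd (hB.2 hub) (not_le.2 hw2)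
  exact ⟨min ((∑ i, ζ i) / n + ε) b, RMB_mem hn Ξ ζ hζ ε hε b hbΞ hble,
    lt_min hw1 hbw⟩
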